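/- Let F be an infinite field and n ≥ 1. The algebra Mₙ(F) satisfies no polynomial identity of degree less than 2n: for every finite set X of non-commuting variables and every nonzero element f of the free F-algebra F⟨X⟩ of degree strictly less than 2n, there exists a valuation v : X → Mₙ(F) whose induced F-algebra homomorphism F⟨X⟩ → Mₙ(F) does not send f to 0. -/

import Mathlib

open MvPolynomial Matrix Finset
open scoped Classical

namespace ALaux

variable {F : Type*} [Field F] {X : Type*}

noncomputable def Em (F : Type*) [Field F] (X : Type*) (n k : ℕ) :
    Matrix (Fin n) (Fin n) (MvPolynomial (X × ℕ) F) :=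
  Matrix.of fun r q => if (r : ℕ) = k / 2 ∧ (q : ℕ) = (k + 1) / 2 then 1 else 0

noncomputable def V (F : Type*) [Field F] {X : Type*} (n : ℕ) (x : X) :
    Matrix (Fin n) (Fin n) (MvPolynomial (X × ℕ) F) :=
  ∑ k ∈ Finset.range (2 * n - 1),
    (MvPolynomial.X (x, k) : MvPolynomial (X × ℕ) F) • Em F X n k

noncomputable def Φ (F : Type*) [Field F] (X : Type*) (n : ℕ) :
    FreeAlgebra F X →ₐ[F] Matrix (Fin n) (Fin n) (MvPolynomial (X × ℕ) F) :=
  FreeAlgebra.lift F (V F n)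

noncomputable def mon : List X → ℕ → ((X × ℕ) →₀ ℕ)
  | [], _ => 0
  | x :: l, a => Finsupp.single (x, a) 1 + mon l (a + 1)

noncomputable def wp (F : Type*) [Field F] {X : Type*} (l : List X) : FreeAlgebra F X :=
  (l.map (FreeAlgebra.ι F)).prod

lemma mon_snd : ∀ (l : List X) (a : ℕ) (p : X × ℕ), p ∈ (mon l a).support → a ≤ p.2 := by
  intro l
  induction l with
  | nil => intro a p hp; simp [mon] at hp
  | cons x t ih =>
    intro a p hp
    rcases Finset.mem_union.mp (Finsupp.support_add hp) with h | h
    · rcases (Finsupp.mem_support_single _ _ _).mp h with ⟨rfl, -⟩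
      exact le_refl _
    · exact le_of_lt (Nat.lt_of_lt_of_le (Nat.lt_succ_self a) (ih (a+1) p h))

lemma mon_apply_lt (l : List X) (a k : ℕ) (x : X) (h : k < a) : mon l a (x, k) = 0 := by
  by_contra hne
  exact absurd (mon_snd l a (x, k) (Finsupp.mem_support_iff.mpr hne)) (by omega)

lemma mon_cons_apply (x y : X) (t : List X) (a : ℕ) :
    mon (x :: t) a (y, a) = if y = x then 1 else 0 := by
  simp only [mon, Finsupp.add_apply, mon_apply_lt t (a+1) a y (Nat.lt_succ_self a),
    add_zero, Finsupp.single_apply]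
  simp [Prod.ext_iff, eq_comm]

lemma mon_eq_zero_iff (l : List X) (a : ℕ) : mon l a = 0 ↔ l = [] := by
  cases l with
  | nil => simp [mon]
  | cons x t =>
    simp only [reduceCtorEq, iff_false]
    intro h
    have := DFunLike.congr_fun h (x, a)
    rw [mon_cons_apply] at this
    simp at this

end ALaux

namespace ALaux2
open ALaux
variable {F : Type*} [Field F] {X : Type*}

lemma Phi_one_entry (n : ℕ) (r q : Fin n) :
    Φ F X n (wp F ([] : List X)) r q = if r = q then 1 else 0 := by
  simp [wp, Matrix.one_apply]

lemma entry_cons (n : ℕ) (x : X) (l : List X) (r q : Fin n) :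
    Φ F X n (wp F (x :: l)) r q =
      ∑ j : Fin n, ∑ k ∈ Finset.range (2 * n - 1),
        (if (r : ℕ) = k / 2 ∧ (j : ℕ) = (k + 1) / 2 then
          MvPolynomial.X (x, k) * Φ F X n (wp F l) j q else 0) := by
  have h1 : wp F (x :: l) = FreeAlgebra.ι F x * wp F l := by simp [wp]
  have h2 : Φ F X n (FreeAlgebra.ι F x) = V F n x := FreeAlgebra.lift_ι_apply _ _
  rw [h1, _root_.map_mul, h2, Matrix.mul_apply]
  refine Finset.sum_congr rfl fun j _ => ?_
  rw [V, Matrix.sum_apply, Finset.sum_mul]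
  refine Finset.sum_congr rfl fun k _ => ?_
  simp only [Matrix.smul_apply, Em, Matrix.of_apply, smul_eq_mul, mul_ite, mul_one, mul_zero,
    ite_mul, zero_mul]

lemma supp_ge (n : ℕ) : ∀ (l : List X) (r q : Fin n) (σ : (X × ℕ) →₀ ℕ),
    σ ∈ (Φ F X n (wp F l) r q).support → ∀ p ∈ σ.support, 2 * (r : ℕ) ≤ p.2 := by
  intro l
  induction l with
  | nil =>
    intro r q σ hσ p hp
    exfalso
    rw [Phi_one_entry, MvPolynomial.mem_support_iff] at hσ
    by_cases h : r = q <;> simp [h, MvPolynomial.coeff_one] at hσ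
    · subst hσ; simp at hp
  | cons x t ih =>
    intro r q σ hσ p hp
    rw [entry_cons, MvPolynomial.mem_support_iff, MvPolynomial.coeff_sum] at hσ
    obtain ⟨j, -, hj⟩ := Finset.exists_ne_zero_of_sum_ne_zero hσ
    rw [MvPolynomial.coeff_sum] at hj
    obtain ⟨k, hkmem, hk⟩ := Finset.exists_ne_zero_of_sum_ne_zero hj
    rw [apply_ite (MvPolynomial.coeff σ), MvPolynomial.coeff_zero] at hk
    by_cases hc : (r : ℕ) = k / 2 ∧ (j : ℕ) = (k + 1) / 2
    swap
    · rw [if_neg hc] at hk; exact absurd rfl hk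
    rw [if_pos hc, MvPolynomial.coeff_X_mul'] at hk
    by_cases hmem : (x, k) ∈ σ.support
    swap
    · rw [if_neg hmem] at hk; exact absurd rfl hk
    rw [if_pos hmem] at hk
    by_cases hpk : p = (x, k)
    · subst hpk; omega
    · have hp' : p ∈ (σ - Finsupp.single (x, k) 1).support := by
        rw [Finsupp.mem_support_iff, Finsupp.tsub_apply, Finsupp.single_apply,
          if_neg (fun h => hpk h.symm)]
        simpa using Finsupp.mem_support_iff.mp hp
      have := ih j q _ (MvPolynomial.mem_support_iff.mpr hk) p hp'
      omega

end ALaux2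

namespace ALaux3
open ALaux ALaux2
variable {F : Type*} [Field F] {X : Type*}

def cnd {X : Type*} (n : ℕ) (l : List X) (a : ℕ) (r q : Fin n) : Prop :=
  if l = [] then r = q
  else (r : ℕ) = a / 2 ∧ (q : ℕ) = (a + l.length) / 2 ∧ a + l.length < 2 * n

lemma main (n : ℕ) : ∀ (l' l : List X) (a : ℕ) (r q : Fin n),
    MvPolynomial.coeff (mon l a) (Φ F X n (wp F l') r q) =
      if l = l' ∧ cnd n l a r q then 1 else 0 := by
  intro l'
  induction l' with
  | nil =>
    intro l a r q
    rw [Phi_one_entry]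
    by_cases hl : l = []
    · subst hl
      by_cases hr : r = q <;>
        simp [hr, MvPolynomial.coeff_one, cnd, mon]
    · by_cases hr : r = q <;>
        simp [hr, MvPolynomial.coeff_one, cnd, hl, mon_eq_zero_iff, eq_comm]
  | cons x' t' IH =>
    intro l a r q
    rw [entry_cons, MvPolynomial.coeff_sum]
    simp only [MvPolynomial.coeff_sum]
    by_cases hl : l = []
    · subst hl
      rw [Finset.sum_eq_zero, if_neg (by simp)]
      intro j _
      rw [Finset.sum_eq_zero]
      intro k _
      rw [apply_ite (MvPolynomial.coeff (mon [] a)), MvPolynomial.coeff_zero,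
        MvPolynomial.coeff_X_mul']
      simp [mon]
    obtain ⟨x, t, rfl⟩ : ∃ y u, l = y :: u := by
      cases l with
      | nil => exact absurd rfl hl
      | cons y u => exact ⟨y, u, rfl⟩
    have key : ∀ j : Fin n, ∀ k ∈ Finset.range (2 * n - 1),
        MvPolynomial.coeff (mon (x :: t) a)
          (if (r : ℕ) = k / 2 ∧ (j : ℕ) = (k + 1) / 2 then
            MvPolynomial.X (x', k) * Φ F X n (wp F t') j q else 0) =
        if k = a ∧ x = x' ∧ (r : ℕ) = a / 2 ∧ (j : ℕ) = (a + 1) / 2 then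
          MvPolynomial.coeff (mon t (a + 1)) (Φ F X n (wp F t') j q) else 0 := by
      intro j k hk
      by_cases hc : (r : ℕ) = k / 2 ∧ (j : ℕ) = (k + 1) / 2
      swap
      · rw [if_neg hc, MvPolynomial.coeff_zero, if_neg]
        rintro ⟨rfl, -, h1, h2⟩
        exact hc ⟨h1, h2⟩
      rw [if_pos hc, MvPolynomial.coeff_X_mul']
      by_cases hmem : (x', k) ∈ (mon (x :: t) a).support
      swap
      · rw [if_neg hmem, if_neg]
        rintro ⟨rfl, rfl, -, -⟩
        exact hmem (Finsupp.mem_support_iff.mpr (by rw [mon_cons_apply, if_pos rfl]; exact one_ne_zero))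
      rw [if_pos hmem]
      by_cases hka : k = a
      · subst hka
        have hxx : x = x' := by
          have h1 := Finsupp.mem_support_iff.mp hmem
          rw [mon_cons_apply] at h1
          by_cases h : x' = x
          · exact h.symm
          · rw [if_neg h] at h1; exact absurd rfl h1
        have hsub : mon (x :: t) k - Finsupp.single (x', k) 1 = mon t (k + 1) := by
          rw [← hxx]
          show Finsupp.single (x, k) 1 + mon t (k + 1) - Finsupp.single (x, k) 1 = _
          exact add_tsub_cancel_left _ _
        rw [hsub, if_pos ⟨rfl, hxx, hc.1, hc.2⟩]
      · rw [if_neg (by rintro ⟨rfl, -⟩; exact hka rfl)]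
        by_contra hne
        have hsupp : mon (x :: t) a - Finsupp.single (x', k) 1 ∈
            (Φ F X n (wp F t') j q).support := MvPolynomial.mem_support_iff.mpr hne
        have hxa : (x, a) ∈ (mon (x :: t) a - Finsupp.single (x', k) 1).support := by
          rw [Finsupp.mem_support_iff, Finsupp.tsub_apply, Finsupp.single_apply,
            if_neg (by simp [Prod.ext_iff]; intro _; omega), mon_cons_apply, if_pos rfl]
          exact one_ne_zero
        have h2j := supp_ge n t' j q _ hsupp (x, a) hxa
        have hak : a ≤ k := mon_snd _ _ _ hmem
        simp only at h2j
        omega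
    rw [Finset.sum_congr rfl (fun j _ => Finset.sum_congr rfl (key j))]
    by_cases ha : a < 2 * n - 1
    swap
    · rw [Finset.sum_eq_zero, if_neg]
      · rintro ⟨-, hcnd⟩
        simp only [cnd, reduceCtorEq, if_false, List.length_cons] at hcnd
        omega
      · intro j _
        rw [Finset.sum_eq_zero]
        intro k hk
        rw [if_neg]
        rintro ⟨rfl, -⟩
        exact ha (Finset.mem_range.mp hk)
    by_cases hx : x = x' ∧ (r : ℕ) = a / 2
    swap
    · rw [Finset.sum_eq_zero, if_neg]
      · rintro ⟨hll, hcnd⟩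
        have h1 : x = x' := ((List.cons.injEq _ _ _ _).mp hll).1
        simp only [cnd, reduceCtorEq, if_false] at hcnd
        exact hx ⟨h1, hcnd.1⟩
      · intro j _
        rw [Finset.sum_eq_zero]
        intro k _
        rw [if_neg]
        rintro ⟨-, h1, h2, -⟩
        exact hx ⟨h1, h2⟩
    obtain ⟨rfl, hra⟩ := hx
    have hj0 : (a + 1) / 2 < n := by omega
    have hsum : ∀ j : Fin n,
        (∑ k ∈ Finset.range (2 * n - 1),
          if k = a ∧ x = x ∧ (r : ℕ) = a / 2 ∧ (j : ℕ) = (a + 1) / 2 then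
            MvPolynomial.coeff (mon t (a + 1)) (Φ F X n (wp F t') j q) else 0)
        = if j = (⟨(a + 1) / 2, hj0⟩ : Fin n) then
            MvPolynomial.coeff (mon t (a + 1)) (Φ F X n (wp F t') j q) else 0 := by
      intro j
      by_cases hj : j = (⟨(a + 1) / 2, hj0⟩ : Fin n)
      · rw [if_pos hj]
        rw [Finset.sum_eq_single_of_mem a (Finset.mem_range.mpr ha)]
        · rw [if_pos ⟨rfl, rfl, hra, by simp [hj]⟩]
        · intro k _ hk
          rw [if_neg]
          rintro ⟨rfl, -⟩
          exact hk rfl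
      · rw [if_neg hj, Finset.sum_eq_zero]
        intro k _
        rw [if_neg]
        rintro ⟨-, -, -, hj'⟩
        exact hj (Fin.ext hj')
    rw [Finset.sum_congr rfl (fun j _ => hsum j)]
    rw [Finset.sum_ite_eq' Finset.univ _ _, if_pos (Finset.mem_univ _)]
    rw [IH t (a + 1) _ q]
    refine if_congr ?_ rfl rfl
    constructor
    · rintro ⟨rfl, h2⟩
      refine ⟨rfl, ?_⟩
      simp only [cnd, reduceCtorEq, if_false, List.length_cons]
      refine ⟨hra, ?_, ?_⟩ <;>
      · by_cases ht : t = []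
        · subst ht
          simp only [cnd, if_pos rfl, eq_self_iff_true, if_true] at h2
          have h3 := congrArg Fin.val h2
          simp only [List.length_nil] at h3 ⊢
          omega
        · simp only [cnd, ht, if_false] at h2
          obtain ⟨-, h3, h4⟩ := h2
          omega
    · rintro ⟨hll, h2⟩
      obtain ⟨-, rfl⟩ : x = x ∧ t = t' := by simpa using hll
      refine ⟨rfl, ?_⟩
      simp only [cnd, reduceCtorEq, if_false, List.length_cons] at h2
      obtain ⟨-, h3, h4⟩ := h2
      by_cases ht : t = []
      · subst ht
        simp only [cnd, if_pos rfl, List.length_nil] at h3 ⊢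
        apply Fin.ext
        simp only []
        omega
      · simp only [cnd, ht, if_false]
        exact ⟨by simp, by omega, by omega⟩

end ALaux3

namespace ALaux4
open ALaux ALaux2 ALaux3
variable {F : Type*} [Field F] {X : Type*}

lemma equiv_wp (l : List X) :
    FreeAlgebra.equivMonoidAlgebraFreeMonoid (wp F l) =
      MonoidAlgebra.single (FreeMonoid.ofList l) 1 := by
  induction l with
  | nil =>
    show FreeAlgebra.equivMonoidAlgebraFreeMonoid (1 : FreeAlgebra F X) = _
    rw [_root_.map_one, MonoidAlgebra.one_def]
    rfl
  | cons x t ih =>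
    have h1 : wp F (x :: t) = FreeAlgebra.ι F x * wp F t := by simp [wp]
    have h2 : FreeAlgebra.equivMonoidAlgebraFreeMonoid (FreeAlgebra.ι F x) =
        MonoidAlgebra.single (FreeMonoid.of x) 1 := by
      simp [FreeAlgebra.equivMonoidAlgebraFreeMonoid, FreeAlgebra.lift_ι_apply]
    rw [h1, _root_.map_mul, h2, ih, MonoidAlgebra.single_mul_single, one_mul,
      FreeMonoid.ofList_cons]

end ALaux4


/-- **Amitsur–Levitzki theorem (minimality assertion).**
Let `F` be an infinite field and `n ≥ 1`.  The matrix algebra `Mₙ(F)` satisfies no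
polynomial identity of degree less than `2n`: for every finite set `X` of
non-commuting variables and every nonzero element `f` of the free algebra `F⟨X⟩`
all of whose monomials (words in the support of the corresponding element of the
monoid algebra of the free monoid on `X`) have length strictly less than `2n`,
there is a valuation `v : X → Mₙ(F)` whose induced `F`-algebra homomorphism
`F⟨X⟩ → Mₙ(F)` does not send `f` to `0`. -/
theorem no_identity_of_degree_lt_two_mul (F : Type*) [Field F] [Infinite F]
    (n : ℕ) (hn : 1 ≤ n) (X : Type*) [Fintype X] (f : FreeAlgebra F X)
    (hf : f ≠ 0)
    (hdeg : ∀ w ∈ (FreeAlgebra.equivMonoidAlgebraFreeMonoid (R := F) (X := X) f).coeff.support,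
      FreeMonoid.length w < 2 * n) :
    ∃ v : X → Matrix (Fin n) (Fin n) F, FreeAlgebra.lift F v f ≠ 0 := by
  classical
  open ALaux ALaux2 ALaux3 ALaux4 in
  set g := FreeAlgebra.equivMonoidAlgebraFreeMonoid (R := F) (X := X) f with hg
  have hg0 : g ≠ 0 := by
    intro h
    apply hf
    have h2 : f = (FreeAlgebra.equivMonoidAlgebraFreeMonoid (R := F) (X := X)).symm g := by
      rw [hg]; simp
    rw [h2, h, map_zero]
  obtain ⟨w, hw⟩ : g.coeff.support.Nonempty := Finsupp.support_nonempty_iff.mpr (by simpa using hg0)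
  have hm : FreeMonoid.length w < 2 * n := hdeg w hw
  set r : Fin n := ⟨0, by omega⟩ with hr
  set q : Fin n := ⟨FreeMonoid.length w / 2, by omega⟩ with hq
  have hlen : FreeMonoid.length w = (FreeMonoid.toList w).length := rfl
  -- f as a sum of words
  have hf_sum : f = ∑ w' ∈ g.coeff.support, g.coeff w' • ALaux.wp F (FreeMonoid.toList w') := by
    have h1 : g = ∑ w' ∈ g.coeff.support, MonoidAlgebra.single w' (g.coeff w') := by
      conv_lhs => rw [← MonoidAlgebra.sum_coeff_single g]
      rfl
    have h2 : ∀ w' : FreeMonoid X,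
        (FreeAlgebra.equivMonoidAlgebraFreeMonoid (R := F) (X := X)).symm
          (MonoidAlgebra.single w' (g.coeff w')) = g.coeff w' • ALaux.wp F (FreeMonoid.toList w') := by
      intro w'
      have h3 : MonoidAlgebra.single w' (g.coeff w') = g.coeff w' • MonoidAlgebra.single w' 1 := by
        rw [MonoidAlgebra.smul_single', mul_one]
      rw [h3, _root_.map_smul]
      congr 1
      rw [AlgEquiv.symm_apply_eq]
      exact (equiv_wp (FreeMonoid.toList w')).symm
    calc f = (FreeAlgebra.equivMonoidAlgebraFreeMonoid (R := F) (X := X)).symm g := by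
              simp [hg]
    _ = ∑ w' ∈ g.coeff.support, g.coeff w' • ALaux.wp F (FreeMonoid.toList w') := by
          conv_lhs => rw [h1]
          rw [map_sum]
          exact Finset.sum_congr rfl fun w' _ => h2 w'
  -- the key coefficient
  have hcoeff : MvPolynomial.coeff (mon (FreeMonoid.toList w) 0)
      (Φ F X n f r q) = g.coeff w := by
    conv_lhs => rw [hf_sum]
    rw [map_sum, Matrix.sum_apply]
    simp only [_root_.map_smul, Matrix.smul_apply, MvPolynomial.coeff_sum,
      MvPolynomial.coeff_smul, smul_eq_mul]
    rw [Finset.sum_eq_single_of_mem w hw]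
    · rw [main n (FreeMonoid.toList w) (FreeMonoid.toList w) 0 r q, if_pos, mul_one]
      refine ⟨rfl, ?_⟩
      by_cases hnil : FreeMonoid.toList w = []
      · simp only [cnd, hnil, if_pos rfl]
        apply Fin.ext
        have : FreeMonoid.length w = 0 := by rw [hlen, hnil]; rfl
        simp [hr, hq, this]
      · simp only [cnd, hnil, if_false]
        refine ⟨by simp [hr], by simp [hq, hlen], by omega⟩
    · intro w' hw' hne
      rw [main n (FreeMonoid.toList w') (FreeMonoid.toList w) 0 r q, if_neg, mul_zero]
      rintro ⟨hEq, -⟩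
      apply hne
      have := congrArg FreeMonoid.ofList hEq
      simpa [FreeMonoid.ofList_toList] using this.symm
  have hgw : g.coeff w ≠ 0 := Finsupp.mem_support_iff.mp hw
  have hP : Φ F X n f r q ≠ 0 := fun h => hgw (by rw [← hcoeff, h, MvPolynomial.coeff_zero])
  obtain ⟨c, hc⟩ : ∃ c : X × ℕ → F, MvPolynomial.eval c (Φ F X n f r q) ≠ 0 := by
    by_contra h
    push_neg at h
    exact hP (MvPolynomial.funext fun c => by simp [h c])
  have haev : ∀ p : MvPolynomial (X × ℕ) F, MvPolynomial.aeval c p = MvPolynomial.eval c p := by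
    intro p
    rw [MvPolynomial.aeval_def, Algebra.algebraMap_self]
    rfl
  refine ⟨fun x => ((MvPolynomial.aeval c : MvPolynomial (X × ℕ) F →ₐ[F] F).mapMatrix :
      Matrix (Fin n) (Fin n) (MvPolynomial (X × ℕ) F) →ₐ[F] Matrix (Fin n) (Fin n) F)
      (V F n x), ?_⟩
  have hcomp : FreeAlgebra.lift F
      (fun x => ((MvPolynomial.aeval c : MvPolynomial (X × ℕ) F →ₐ[F] F).mapMatrix :
        Matrix (Fin n) (Fin n) (MvPolynomial (X × ℕ) F) →ₐ[F] Matrix (Fin n) (Fin n) F)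
        (V F n x)) =
      ((MvPolynomial.aeval c : MvPolynomial (X × ℕ) F →ₐ[F] F).mapMatrix :
        Matrix (Fin n) (Fin n) (MvPolynomial (X × ℕ) F) →ₐ[F] Matrix (Fin n) (Fin n) F).comp
        (Φ F X n) := by
    apply FreeAlgebra.hom_ext
    funext x
    simp only [Function.comp_apply, AlgHom.coe_comp, FreeAlgebra.lift_ι_apply]
    congr 1
    exact (FreeAlgebra.lift_ι_apply _ _).symm
  rw [hcomp]
  intro h0
  apply hc
  rw [← haev]
  have h1 := congrFun (congrFun (congrArg (fun M => (M : Matrix (Fin n) (Fin n) F)) h0) r) q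
  simpa [AlgHom.mapMatrix_apply, Matrix.map_apply] using h1
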